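/- Fix a, b, c ∈ ℂ and d > 0 with S_d = [[a, d], [cd, b]], and suppose W(S_d) is a non-degenerate elliptical disk. Then a lies on the boundary of W(S_d) if and only if b lies on the boundary of W(S_d), and both occur if and only if |c| = 1. -/

import Mathlib

/-- The numerical range of a `2 × 2` complex matrix. -/
noncomputable def numRange (M : Matrix (Fin 2) (Fin 2) ℂ) : Set ℂ :=
  {z | ∃ x : EuclideanSpace ℂ (Fin 2), ‖x‖ = 1 ∧
    z = inner (𝕜 := ℂ) x (Matrix.toEuclideanCLM (𝕜 := ℂ) M x)}

open Complex Filter Topology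


noncomputable def conjCLM : ℂ →L[ℝ] ℂ := Complex.conjCLE.toContinuousLinearMap

@[simp] lemma conjCLM_apply (z : ℂ) : conjCLM z = starRingEnd ℂ z := rfl

/-- The real-linear map `z ↦ α z + β z̄` as a linear equivalence when `|α| ≠ |β|`. -/
noncomputable def ellipseMap (α β : ℂ) : ℂ →L[ℝ] ℂ :=
  α • ContinuousLinearMap.id ℝ ℂ + β • conjCLM

@[simp] lemma ellipseMap_apply (α β z : ℂ) :
    ellipseMap α β z = α * z + β * starRingEnd ℂ z := by
  simp [ellipseMap, smul_eq_mul]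

noncomputable def ellipseEquiv (α β : ℂ) (h : Complex.normSq α ≠ Complex.normSq β) :
    ℂ ≃L[ℝ] ℂ :=
  LinearEquiv.toContinuousLinearEquiv <| LinearEquiv.ofLinear
    (ellipseMap α β).toLinearMap
    ((((Complex.normSq α : ℂ) - (Complex.normSq β : ℂ))⁻¹) •
      (ellipseMap (starRingEnd ℂ α) (-β)).toLinearMap)
    (by
      have hne : (Complex.normSq α : ℂ) - (Complex.normSq β : ℂ) ≠ 0 := by
        intro he
        apply h
        have : (Complex.normSq α : ℂ) = (Complex.normSq β : ℂ) := by linear_combination he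
        exact_mod_cast this
      ext z
      simp only [LinearMap.coe_comp, Function.comp_apply, ContinuousLinearMap.coe_coe,
        LinearMap.smul_apply, LinearMap.id_coe, id_eq, ellipseMap_apply, smul_eq_mul,
        ContinuousLinearMap.coe_smul', Pi.smul_apply]
      simp only [map_mul, map_add, map_sub, map_neg, Complex.conj_conj, map_inv₀,
        Complex.conj_ofReal]
      field_simp
      linear_combination z * Complex.mul_conj α - z * Complex.mul_conj β)
    (by
      have hne : (Complex.normSq α : ℂ) - (Complex.normSq β : ℂ) ≠ 0 := by
        intro he
        apply h
        have : (Complex.normSq α : ℂ) = (Complex.normSq β : ℂ) := by linear_combination he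
        exact_mod_cast this
      ext z
      simp only [LinearMap.coe_comp, Function.comp_apply, ContinuousLinearMap.coe_coe,
        LinearMap.smul_apply, LinearMap.id_coe, id_eq, ellipseMap_apply, smul_eq_mul,
        ContinuousLinearMap.coe_smul', Pi.smul_apply]
      simp only [map_mul, map_add, map_sub, map_neg, Complex.conj_conj, map_inv₀,
        Complex.conj_ofReal]
      field_simp
      linear_combination z * Complex.mul_conj α - z * Complex.mul_conj β)

@[simp] lemma ellipseEquiv_apply (α β : ℂ) (h : Complex.normSq α ≠ Complex.normSq β) (z : ℂ) :
    ellipseEquiv α β h z = α * z + β * starRingEnd ℂ z := by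
  simp [ellipseEquiv]

lemma ellipseEquiv_coe (α β : ℂ) (h : Complex.normSq α ≠ Complex.normSq β) :
    (ellipseEquiv α β h : ℂ →L[ℝ] ℂ) = ellipseMap α β := by
  ext z
  simp [ellipseEquiv]

lemma hs_conj : HasStrictFDerivAt (fun z : ℂ => starRingEnd ℂ z) conjCLM 0 :=
  conjCLM.hasStrictFDerivAt

lemma hs_mulconj : HasStrictFDerivAt (fun w : ℂ => w * starRingEnd ℂ w) (0 : ℂ →L[ℝ] ℂ) 0 := by
  exact ((hasStrictFDerivAt_id (𝕜 := ℝ) (0:ℂ)).mul hs_conj).congr_fderiv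
    (by ext z; simp)

lemma hs_normSq : HasStrictFDerivAt (fun w : ℂ => Complex.normSq w) (0 : ℂ →L[ℝ] ℝ) 0 := by
  have hre := (Complex.reCLM.hasStrictFDerivAt (x := (0:ℂ)))
  have him := (Complex.imCLM.hasStrictFDerivAt (x := (0:ℂ)))
  have h := ((hre.mul hre).add (him.mul him)).congr_fderiv (g' := (0 : ℂ →L[ℝ] ℝ))
    (by ext z; simp)
  exact h.congr_of_eventuallyEq (by filter_upwards with w; simp [Complex.normSq_apply])

lemma hs_sqrtPart : HasStrictFDerivAt
    (fun w : ℂ => ((Real.sqrt (1 - Complex.normSq w) : ℝ) : ℂ)) (0 : ℂ →L[ℝ] ℂ) 0 := by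
  have hg : HasStrictFDerivAt (fun w : ℂ => 1 - Complex.normSq w) (0 : ℂ →L[ℝ] ℝ) 0 := by
    exact ((hasStrictFDerivAt_const (1:ℝ) (0:ℂ)).sub hs_normSq).congr_fderiv (by ext z; simp)
  have hs : HasStrictDerivAt Real.sqrt (1/(2*Real.sqrt 1)) ((fun w : ℂ => 1 - Complex.normSq w) 0) := by
    simp only [Complex.normSq_zero, sub_zero]
    exact Real.hasStrictDerivAt_sqrt one_ne_zero
  have h2 := hs.comp_hasStrictFDerivAt 0 hg
  have h3 := Complex.ofRealCLM.hasStrictFDerivAt.comp 0 h2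
  exact h3.congr_fderiv (by ext z; simp)

lemma hs_F (A α' β' : ℂ) (d : ℝ) : HasStrictFDerivAt
    (fun w : ℂ => A * (w * starRingEnd ℂ w)
      + ((d:ℂ) * ((Real.sqrt (1 - Complex.normSq w) : ℝ) : ℂ)) * (α' * w + β' * starRingEnd ℂ w))
    (ellipseMap ((d:ℂ) * α') ((d:ℂ) * β')) 0 := by
  have t1 : HasStrictFDerivAt (fun w : ℂ => A * (w * starRingEnd ℂ w)) (0 : ℂ →L[ℝ] ℂ) 0 :=
    (hs_mulconj.const_mul A).congr_fderiv (by ext z; simp)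
  have t2 : HasStrictFDerivAt (fun w : ℂ => (d:ℂ) * ((Real.sqrt (1 - Complex.normSq w) : ℝ) : ℂ))
      (0 : ℂ →L[ℝ] ℂ) 0 := (hs_sqrtPart.const_mul (d:ℂ)).congr_fderiv (by ext z; simp)
  have t3 : HasStrictFDerivAt (fun w : ℂ => α' * w + β' * starRingEnd ℂ w)
      (ellipseMap α' β') 0 := by
    have := (ellipseMap α' β').hasStrictFDerivAt (x := (0:ℂ))
    exact this.congr_of_eventuallyEq (by filter_upwards with w; simp)
  have t4 := t2.mul t3
  have t5 := t1.add t4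
  refine t5.congr_fderiv ?_
  ext z
  simp [smul_eq_mul]
  ring


lemma mem_interior_aux {W : Set ℂ} {p : ℂ} {F : ℂ → ℂ} {L : ℂ ≃L[ℝ] ℂ}
    (hF : HasStrictFDerivAt F (L : ℂ →L[ℝ] ℂ) 0) (hF0 : F 0 = 0)
    (hmem : ∀ w, Complex.normSq w ≤ 1 → p + F w ∈ W) : p ∈ interior W := by
  rw [mem_interior_iff_mem_nhds]
  have hmap : Filter.map F (𝓝 0) = 𝓝 0 := by
    have := hF.map_nhds_eq_of_equiv
    rwa [hF0] at this
  have hmap2 : Filter.map (fun w => p + F w) (𝓝 (0:ℂ)) = 𝓝 p := by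
    rw [show (fun w => p + F w) = (fun z => p + z) ∘ F from rfl, ← Filter.map_map, hmap]
    have := (Homeomorph.addLeft p).map_nhds_eq (0:ℂ)
    simpa using this
  rw [← hmap2, Filter.mem_map]
  refine Filter.mem_of_superset (Metric.closedBall_mem_nhds (0:ℂ) one_pos) ?_
  intro w hw
  have : Complex.normSq w ≤ 1 := by
    have habs : ‖w‖ ≤ 1 := by simpa [Complex.dist_eq] using hw
    have := Complex.normSq_eq_norm_sq w
    nlinarith [norm_nonneg w]
  exact hmem w this


lemma nr_inner (a b c : ℂ) (d : ℝ) (x : EuclideanSpace ℂ (Fin 2)) :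
    inner (𝕜 := ℂ) x (Matrix.toEuclideanCLM (𝕜 := ℂ) !![a, (d:ℂ); c*d, b] x) =
      a * (starRingEnd ℂ (x 0) * x 0) + b * (starRingEnd ℂ (x 1) * x 1)
      + d * (starRingEnd ℂ (x 0) * x 1 + c * (x 0 * starRingEnd ℂ (x 1))) := by
  have h : (Matrix.toEuclideanCLM (𝕜 := ℂ) !![a, (d:ℂ); c*d, b] x) =
      (WithLp.equiv 2 (Fin 2 → ℂ)).symm
        (Matrix.mulVec !![a, (d:ℂ); c*d, b] ((WithLp.equiv 2 (Fin 2 → ℂ)) x)) := rfl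
  rw [h, PiLp.inner_apply]
  simp only [Fin.sum_univ_two, WithLp.equiv_symm_apply, PiLp.toLp_apply, Matrix.mulVec, dotProduct,
    Fin.sum_univ_two, Matrix.cons_val', Matrix.cons_val_zero, Matrix.cons_val_one,
    Matrix.head_cons, Matrix.empty_val', Matrix.cons_val_fin_one, Matrix.head_fin_const,
    WithLp.equiv_apply, RCLike.inner_apply]
  have e00 : (!![a, (d:ℂ); c*d, b]) 0 0 = a := rfl
  have e01 : (!![a, (d:ℂ); c*d, b]) 0 1 = (d:ℂ) := rfl
  have e10 : (!![a, (d:ℂ); c*d, b]) 1 0 = c*d := rfl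
  have e11 : (!![a, (d:ℂ); c*d, b]) 1 1 = b := rfl
  rw [e00, e01, e10, e11]
  ring

lemma nr_norm (x : EuclideanSpace ℂ (Fin 2)) :
    ‖x‖ = 1 ↔ Complex.normSq (x 0) + Complex.normSq (x 1) = 1 := by
  have h : ‖x‖ ^ 2 = Complex.normSq (x 0) + Complex.normSq (x 1) := by
    rw [PiLp.norm_sq_eq_of_L2, Fin.sum_univ_two]
    simp only [Complex.sq_norm]
  constructor
  · intro h1; rw [← h, h1]; norm_num
  · intro h1
    have h2 : ‖x‖ ^ 2 = 1 := by rw [h, h1]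
    nlinarith [norm_nonneg x]

lemma memF (a b c : ℂ) (d : ℝ) (w : ℂ) (hw : Complex.normSq w ≤ 1) :
    a + ((b - a) * (w * starRingEnd ℂ w)
      + ((d:ℂ) * ((Real.sqrt (1 - Complex.normSq w) : ℝ) : ℂ)) * (1 * w + c * starRingEnd ℂ w))
      ∈ numRange !![a, (d:ℂ); c*d, b] := by
  set s : ℝ := Real.sqrt (1 - Complex.normSq w) with hs
  have hs2 : ((s:ℂ)) * (s:ℂ) = 1 - (Complex.normSq w : ℂ) := by
    have h0 : (0:ℝ) ≤ 1 - Complex.normSq w := by linarith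
    have := Real.sq_sqrt h0
    rw [hs]
    norm_cast
    rw [← sq]; exact this
  refine ⟨(WithLp.equiv 2 (Fin 2 → ℂ)).symm ![(s:ℂ), w], ?_, ?_⟩
  · rw [nr_norm]
    simp only [WithLp.equiv_symm_apply, PiLp.toLp_apply, Matrix.cons_val_zero, Matrix.cons_val_one,
      Matrix.head_cons]
    have : Complex.normSq ((s:ℂ)) = 1 - Complex.normSq w := by
      rw [Complex.normSq_ofReal]
      have h0 : (0:ℝ) ≤ 1 - Complex.normSq w := by linarith
      exact Real.mul_self_sqrt h0
    rw [this]; ring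
  · rw [nr_inner]
    simp only [WithLp.equiv_symm_apply, PiLp.toLp_apply, Matrix.cons_val_zero, Matrix.cons_val_one,
      Matrix.head_cons, Complex.conj_ofReal]
    linear_combination (-a) * Complex.mul_conj w + (-a) * hs2

lemma memG (a b c : ℂ) (d : ℝ) (w : ℂ) (hw : Complex.normSq w ≤ 1) :
    b + ((a - b) * (w * starRingEnd ℂ w)
      + ((d:ℂ) * ((Real.sqrt (1 - Complex.normSq w) : ℝ) : ℂ)) * (c * w + 1 * starRingEnd ℂ w))
      ∈ numRange !![a, (d:ℂ); c*d, b] := by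
  set s : ℝ := Real.sqrt (1 - Complex.normSq w) with hs
  have hs2 : ((s:ℂ)) * (s:ℂ) = 1 - (Complex.normSq w : ℂ) := by
    have h0 : (0:ℝ) ≤ 1 - Complex.normSq w := by linarith
    have := Real.sq_sqrt h0
    rw [hs]
    norm_cast
    rw [← sq]; exact this
  refine ⟨(WithLp.equiv 2 (Fin 2 → ℂ)).symm ![w, (s:ℂ)], ?_, ?_⟩
  · rw [nr_norm]
    simp only [WithLp.equiv_symm_apply, PiLp.toLp_apply, Matrix.cons_val_zero, Matrix.cons_val_one,
      Matrix.head_cons]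
    have : Complex.normSq ((s:ℂ)) = 1 - Complex.normSq w := by
      rw [Complex.normSq_ofReal]
      have h0 : (0:ℝ) ≤ 1 - Complex.normSq w := by linarith
      exact Real.mul_self_sqrt h0
    rw [this]; ring
  · rw [nr_inner]
    simp only [WithLp.equiv_symm_apply, PiLp.toLp_apply, Matrix.cons_val_zero, Matrix.cons_val_one,
      Matrix.head_cons, Complex.conj_ofReal]
    linear_combination (-b) * Complex.mul_conj w + (-b) * hs2

lemma nr_subset (a b γ : ℂ) (d : ℝ) (hγ : Complex.normSq γ = 1) :
    ∀ z ∈ numRange !![a, (d:ℂ); (γ^2)*d, b],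
      ∃ t s : ℝ, 0 ≤ t ∧ t ≤ 1 ∧ z = a + (b - a) * t + γ * s := by
  rintro z ⟨x, hx, rfl⟩
  rw [nr_inner]
  set x0 := x 0
  set x1 := x 1
  refine ⟨Complex.normSq x1, d * (2 * ((starRingEnd ℂ γ) * (starRingEnd ℂ x0) * x1).re),
    Complex.normSq_nonneg x1, ?_, ?_⟩
  · rw [nr_norm] at hx
    nlinarith [Complex.normSq_nonneg x0]
  · have hR0 : x0 * starRingEnd ℂ x0 = (Complex.normSq x0 : ℂ) := Complex.mul_conj x0
    have hR1 : x1 * starRingEnd ℂ x1 = (Complex.normSq x1 : ℂ) := Complex.mul_conj x1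
    have hR2 : (Complex.normSq x0 : ℂ) = 1 - (Complex.normSq x1 : ℂ) := by
      rw [nr_norm] at hx
      have : Complex.normSq x0 = 1 - Complex.normSq x1 := by linarith
      rw [this]; push_cast; ring
    have hR3 : γ * starRingEnd ℂ γ = 1 := by rw [Complex.mul_conj, hγ]; norm_num
    have hR4 : (starRingEnd ℂ γ) * (starRingEnd ℂ x0) * x1
        + γ * x0 * (starRingEnd ℂ x1)
        = 2 * ((((starRingEnd ℂ γ) * (starRingEnd ℂ x0) * x1).re : ℝ) : ℂ) := by
      have h := Complex.add_conj ((starRingEnd ℂ γ) * (starRingEnd ℂ x0) * x1)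
      have hc : starRingEnd ℂ ((starRingEnd ℂ γ) * (starRingEnd ℂ x0) * x1)
          = γ * x0 * (starRingEnd ℂ x1) := by
        simp only [map_mul, Complex.conj_conj]
      rw [hc] at h
      rw [h]; push_cast; ring
    push_cast
    linear_combination a * hR0 + a * hR2 + b * hR1 + ((d:ℂ) * γ) * hR4
      + (-(d:ℂ) * (starRingEnd ℂ x0 * x1)) * hR3

lemma not_interior_of_unit (a b c : ℂ) (d : ℝ) (habs : ‖c‖ = 1)
    (hnd : (interior (numRange !![a, (d:ℂ); c*d, b])).Nonempty) :
    a ∉ interior (numRange !![a, (d:ℂ); c*d, b]) ∧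
      b ∉ interior (numRange !![a, (d:ℂ); c*d, b]) := by
  obtain ⟨γ, hγ2⟩ := IsAlgClosed.exists_pow_nat_eq c (n := 2) (by norm_num)
  subst hγ2
  have hγ : Complex.normSq γ = 1 := by
    have h1 : Complex.normSq (γ^2) = 1 := by
      rw [Complex.normSq_eq_norm_sq, habs]; norm_num
    rw [map_pow] at h1
    nlinarith [Complex.normSq_nonneg γ]
  have hγabs : ‖γ‖ = 1 := by
    have := Complex.sq_norm γ
    nlinarith [norm_nonneg γ]
  set W := numRange !![a, (d:ℂ); (γ^2)*d, b] with hW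
  have key := nr_subset a b γ d hγ
  -- the real-linear functional built from a unit vector μ
  have lin_eval : ∀ μ : ℂ, ∀ t s : ℝ,
      ((starRingEnd ℂ μ) * (a + (b - a) * t + γ * s)).re
        = ((starRingEnd ℂ μ) * a).re + t * ((starRingEnd ℂ μ) * (b - a)).re
          + s * ((starRingEnd ℂ μ) * γ).re := by
    intro μ t s
    simp only [mul_add, Complex.add_re]
    congr 1
    · congr 1
      · rw [show (starRingEnd ℂ μ) * ((b - a) * (t:ℂ)) = ((starRingEnd ℂ μ) * (b-a)) * (t:ℂ) by ring]
        rw [Complex.mul_re]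
        simp [mul_comm]
    · rw [show (starRingEnd ℂ μ) * (γ * (s:ℂ)) = ((starRingEnd ℂ μ) * γ) * (s:ℂ) by ring]
      rw [Complex.mul_re]
      simp [mul_comm]
  have hIγ_re : ((starRingEnd ℂ (Complex.I * γ)) * γ).re = 0 := by
    have : (starRingEnd ℂ (Complex.I * γ)) * γ = -Complex.I * (starRingEnd ℂ γ * γ) := by
      simp only [map_mul, Complex.conj_I]; ring
    rw [this, show starRingEnd ℂ γ * γ = 1 by rw [mul_comm, Complex.mul_conj, hγ]; norm_num]
    simp
  set r := ((starRingEnd ℂ (Complex.I * γ)) * (b - a)).re with hr_def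
  by_cases hr : r = 0
  · -- degenerate: W lies in a line, contradicting nonempty interior
    exfalso
    obtain ⟨z₀, hz₀⟩ := hnd
    have hconst : ∀ z ∈ W, ((starRingEnd ℂ (Complex.I * γ)) * z).re
        = ((starRingEnd ℂ (Complex.I * γ)) * a).re := by
      intro z hz
      obtain ⟨t, s, _, _, rfl⟩ := key z hz
      rw [lin_eval, ← hr_def, hr, hIγ_re]; ring
    rw [mem_interior_iff_mem_nhds, Metric.mem_nhds_iff] at hz₀
    obtain ⟨ε, hε, hball⟩ := hz₀
    have hz₀W : z₀ ∈ W := hball (Metric.mem_ball_self hε)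
    have hz₁W : z₀ + ((ε/2 : ℝ) : ℂ) * (Complex.I * γ) ∈ W := by
      apply hball
      rw [Metric.mem_ball, dist_eq_norm]
      have : z₀ + ((ε/2 : ℝ) : ℂ) * (Complex.I * γ) - z₀ = ((ε/2 : ℝ) : ℂ) * (Complex.I * γ) := by ring
      rw [this]
      simp only [norm_mul, Complex.norm_real, Complex.norm_I, Real.norm_eq_abs]
      rw [show ‖γ‖ = 1 from hγabs]
      rw [abs_of_pos (by linarith)]
      linarith
    have h1 := hconst _ hz₀W
    have h2 := hconst _ hz₁W
    rw [mul_add, Complex.add_re, h1] at h2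
    have : ((starRingEnd ℂ (Complex.I * γ)) * (((ε/2 : ℝ) : ℂ) * (Complex.I * γ))).re = ε/2 := by
      rw [show (starRingEnd ℂ (Complex.I * γ)) * (((ε/2 : ℝ) : ℂ) * (Complex.I * γ))
            = ((ε/2 : ℝ) : ℂ) * ((Complex.I * γ) * starRingEnd ℂ (Complex.I * γ)) by ring,
          Complex.mul_conj]
      have : Complex.normSq (Complex.I * γ) = 1 := by
        rw [map_mul, Complex.normSq_I, hγ]; norm_num
      rw [this]
      simp
    rw [this] at h2
    linarith
  · -- non-degenerate direction: a minimizes, b maximizes a linear functional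
    set ε₀ : ℝ := if 0 < r then 1 else -1 with hε₀
    set μ : ℂ := (ε₀ : ℂ) * (Complex.I * γ) with hμ
    have hμγ : ((starRingEnd ℂ μ) * γ).re = 0 := by
      rw [hμ, map_mul, show ((starRingEnd ℂ (ε₀:ℂ)) * starRingEnd ℂ (Complex.I * γ)) * γ
          = (starRingEnd ℂ (ε₀:ℂ)) * ((starRingEnd ℂ (Complex.I * γ)) * γ) by ring]
      rw [Complex.conj_ofReal, show ((starRingEnd ℂ (Complex.I * γ)) * γ) =
        ((((starRingEnd ℂ (Complex.I * γ)) * γ).re : ℝ) : ℂ) + (((starRingEnd ℂ (Complex.I * γ)) * γ).im : ℝ) * Complex.I from (Complex.re_add_im _).symm, hIγ_re]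
      simp
    have hμba : 0 < ((starRingEnd ℂ μ) * (b - a)).re := by
      rw [hμ, map_mul, show ((starRingEnd ℂ (ε₀:ℂ)) * starRingEnd ℂ (Complex.I * γ)) * (b - a)
          = (starRingEnd ℂ (ε₀:ℂ)) * ((starRingEnd ℂ (Complex.I * γ)) * (b - a)) by ring,
        Complex.conj_ofReal]
      rw [show ((ε₀:ℂ) * ((starRingEnd ℂ (Complex.I * γ)) * (b - a))).re
          = ε₀ * ((starRingEnd ℂ (Complex.I * γ)) * (b - a)).re by
        rw [Complex.mul_re]; simp]
      rw [← hr_def, hε₀]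
      rcases lt_or_ge 0 r with h | h
      · simp [h]
      · have : r < 0 := lt_of_le_of_ne h hr
        simp only [if_neg (not_lt.mpr h)]
        nlinarith
    have hμns : Complex.normSq μ = 1 := by
      rw [hμ, map_mul, map_mul, Complex.normSq_I, hγ, Complex.normSq_ofReal]
      have : ε₀ * ε₀ = 1 := by rw [hε₀]; split <;> norm_num
      rw [this]; norm_num
    have hμabs : ‖μ‖ = 1 := by
      have := Complex.sq_norm μ
      nlinarith [norm_nonneg μ]
    have bound : ∀ z ∈ W, ((starRingEnd ℂ μ) * a).re ≤ ((starRingEnd ℂ μ) * z).re ∧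
        ((starRingEnd ℂ μ) * z).re ≤ ((starRingEnd ℂ μ) * a).re + ((starRingEnd ℂ μ) * (b - a)).re := by
      intro z hz
      obtain ⟨t, s, ht0, ht1, rfl⟩ := key z hz
      rw [lin_eval, hμγ]
      constructor
      · nlinarith
      · nlinarith
    constructor
    · intro hmem
      rw [mem_interior_iff_mem_nhds, Metric.mem_nhds_iff] at hmem
      obtain ⟨ε, hε, hball⟩ := hmem
      have hzW : a - ((ε/2 : ℝ) : ℂ) * μ ∈ W := by
        apply hball
        rw [Metric.mem_ball, dist_eq_norm]
        have : a - ((ε/2 : ℝ) : ℂ) * μ - a = -(((ε/2 : ℝ) : ℂ) * μ) := by ring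
        rw [this, norm_neg]
        simp only [norm_mul, Complex.norm_real, Real.norm_eq_abs]
        rw [show ‖μ‖ = 1 from hμabs, abs_of_pos (by linarith)]
        linarith
      have := (bound _ hzW).1
      have heval : ((starRingEnd ℂ μ) * (a - ((ε/2 : ℝ) : ℂ) * μ)).re
          = ((starRingEnd ℂ μ) * a).re - ε/2 := by
        rw [mul_sub, Complex.sub_re]
        congr 1
        rw [show (starRingEnd ℂ μ) * (((ε/2 : ℝ) : ℂ) * μ) = ((ε/2 : ℝ) : ℂ) * (μ * starRingEnd ℂ μ) by ring,
          Complex.mul_conj, hμns]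
        simp
      rw [heval] at this
      linarith
    · intro hmem
      rw [mem_interior_iff_mem_nhds, Metric.mem_nhds_iff] at hmem
      obtain ⟨ε, hε, hball⟩ := hmem
      have hzW : b + ((ε/2 : ℝ) : ℂ) * μ ∈ W := by
        apply hball
        rw [Metric.mem_ball, dist_eq_norm]
        have : b + ((ε/2 : ℝ) : ℂ) * μ - b = ((ε/2 : ℝ) : ℂ) * μ := by ring
        rw [this]
        simp only [norm_mul, Complex.norm_real, Real.norm_eq_abs]
        rw [show ‖μ‖ = 1 from hμabs, abs_of_pos (by linarith)]
        linarith
      have := (bound _ hzW).2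
      have heval : ((starRingEnd ℂ μ) * (b + ((ε/2 : ℝ) : ℂ) * μ)).re
          = ((starRingEnd ℂ μ) * b).re + ε/2 := by
        rw [mul_add, Complex.add_re]
        congr 1
        rw [show (starRingEnd ℂ μ) * (((ε/2 : ℝ) : ℂ) * μ) = ((ε/2 : ℝ) : ℂ) * (μ * starRingEnd ℂ μ) by ring,
          Complex.mul_conj, hμns]
        simp
      rw [heval] at this
      have hb : ((starRingEnd ℂ μ) * b).re
          = ((starRingEnd ℂ μ) * a).re + ((starRingEnd ℂ μ) * (b - a)).re := by
        rw [show (starRingEnd ℂ μ) * (b - a) = (starRingEnd ℂ μ) * b - (starRingEnd ℂ μ) * a by ring,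
          Complex.sub_re]
        ring
      rw [hb] at this
      linarith

lemma mem_a (a b c : ℂ) (d : ℝ) : a ∈ numRange !![a, (d:ℂ); c*d, b] := by
  have := memF a b c d 0 (by simp)
  simpa using this

lemma mem_b (a b c : ℂ) (d : ℝ) : b ∈ numRange !![a, (d:ℂ); c*d, b] := by
  have := memG a b c d 0 (by simp)
  simpa using this

lemma interior_of_not_unit (a b c : ℂ) (d : ℝ) (hd : 0 < d) (habs : ‖c‖ ≠ 1) :
    a ∈ interior (numRange !![a, (d:ℂ); c*d, b]) ∧
      b ∈ interior (numRange !![a, (d:ℂ); c*d, b]) := by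
  have hns : Complex.normSq c ≠ 1 := by
    intro h
    apply habs
    have := Complex.sq_norm c
    nlinarith [norm_nonneg c]
  have hA : Complex.normSq ((d:ℂ)) ≠ Complex.normSq ((d:ℂ) * c) := by
    rw [map_mul, Complex.normSq_ofReal]
    intro h
    apply hns
    have hd2 : d * d ≠ 0 := by positivity
    field_simp at h
    nlinarith
  have hB : Complex.normSq ((d:ℂ) * c) ≠ Complex.normSq ((d:ℂ)) := fun h => hA h.symm
  constructor
  · apply mem_interior_aux (L := ellipseEquiv (d:ℂ) ((d:ℂ)*c) hA)
      (F := fun w : ℂ => (b - a) * (w * starRingEnd ℂ w)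
        + ((d:ℂ) * ((Real.sqrt (1 - Complex.normSq w) : ℝ) : ℂ)) * (1 * w + c * starRingEnd ℂ w))
    · exact (hs_F (b-a) 1 c d).congr_fderiv (by rw [mul_one, ellipseEquiv_coe])
    · simp
    · exact fun w hw => memF a b c d w hw
  · apply mem_interior_aux (L := ellipseEquiv ((d:ℂ)*c) ((d:ℂ)) hB)
      (F := fun w : ℂ => (a - b) * (w * starRingEnd ℂ w)
        + ((d:ℂ) * ((Real.sqrt (1 - Complex.normSq w) : ℝ) : ℂ)) * (c * w + 1 * starRingEnd ℂ w))
    · exact (hs_F (a-b) c 1 d).congr_fderiv (by rw [mul_one, ellipseEquiv_coe])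
    · simp
    · exact fun w hw => memG a b c d w hw

/-- If `W(S_d)` is a non-degenerate elliptical disk (i.e. has nonempty interior),
then `a ∈ ∂W(S_d) ↔ b ∈ ∂W(S_d)`, and this occurs iff `|c| = 1`. -/
theorem stmt_16 (a b c : ℂ) (d : ℝ) (hd : 0 < d)
    (hnd : (interior (numRange !![a, (d : ℂ); c * d, b])).Nonempty) :
    (a ∈ frontier (numRange !![a, (d : ℂ); c * d, b]) ↔
      b ∈ frontier (numRange !![a, (d : ℂ); c * d, b])) ∧
    (a ∈ frontier (numRange !![a, (d : ℂ); c * d, b]) ↔ ‖c‖ = 1) := by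
  by_cases habs : ‖c‖ = 1
  · obtain ⟨hna, hnb⟩ := not_interior_of_unit a b c d habs hnd
    have hfa : a ∈ frontier (numRange !![a, (d : ℂ); c * d, b]) := by
      exact ⟨subset_closure (mem_a a b c d), hna⟩
    have hfb : b ∈ frontier (numRange !![a, (d : ℂ); c * d, b]) := by
      exact ⟨subset_closure (mem_b a b c d), hnb⟩
    exact ⟨iff_of_true hfa hfb, iff_of_true hfa habs⟩
  · obtain ⟨hia, hib⟩ := interior_of_not_unit a b c d hd habs
    have hfa : a ∉ frontier (numRange !![a, (d : ℂ); c * d, b]) := by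
      exact fun h => h.2 hia
    have hfb : b ∉ frontier (numRange !![a, (d : ℂ); c * d, b]) := by
      exact fun h => h.2 hib
    exact ⟨iff_of_false hfa hfb, iff_of_false hfa habs⟩
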